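/- arXiv:1709.02573 — 5 statements merged into one kernel-verified Lean document; each statement's English description precedes it below -/
import Mathlib

section
/- If X is a Hausdorff topological space and k ≥ 1, then the k-th symmetric potency exp_k(X), with the quotient topology induced by π : X^k → exp_k(X), is Hausdorff. -/
open Set

/-- The `k`-th symmetric potency: nonempty subsets of `X` of cardinality at most `k`. -/
def SymPot (X : Type*) (k : ℕ) : Type _ :=
  {A : Set X // 0 < A.ncard ∧ A.ncard ≤ k}

/-- The canonical projection `π : X^k → exp_k X`. -/
def symPotProj (X : Type*) (k : ℕ) [NeZero k] : (Fin k → X) → SymPot X k :=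
  fun x => ⟨Set.range x, by
    constructor
    · exact (Set.ncard_pos (Set.finite_range x)).mpr (Set.range_nonempty x)
    · calc (Set.range x).ncard = Nat.card (Set.range x) := (Nat.card_coe_set_eq _).symm
        _ ≤ Nat.card (Fin k) := Finite.card_range_le x
        _ = k := Nat.card_eq_fintype_card.trans (Fintype.card_fin k)⟩

/-- The quotient topology on `exp_k X` induced by `π`. -/
instance (X : Type*) (k : ℕ) [TopologicalSpace X] [NeZero k] :
    TopologicalSpace (SymPot X k) :=
  TopologicalSpace.coinduced (symPotProj X k) inferInstance
lemma symPot_isOpen_sub (X : Type*) [TopologicalSpace X] (k : ℕ) [NeZero k]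
    {V : Set X} (hV : IsOpen V) : IsOpen {C : SymPot X k | C.1 ⊆ V} := by
  rw [isOpen_coinduced]
  have h : symPotProj X k ⁻¹' {C : SymPot X k | C.1 ⊆ V}
      = ⋂ i : Fin k, (fun x : Fin k → X => x i) ⁻¹' V := by
    ext x
    simp [symPotProj, Set.range_subset_iff]
  rw [h]
  exact isOpen_iInter_of_finite fun i => hV.preimage (continuous_apply i)

lemma symPot_isOpen_meet (X : Type*) [TopologicalSpace X] (k : ℕ) [NeZero k]
    {U : Set X} (hU : IsOpen U) : IsOpen {C : SymPot X k | (C.1 ∩ U).Nonempty} := by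
  rw [isOpen_coinduced]
  have h : symPotProj X k ⁻¹' {C : SymPot X k | (C.1 ∩ U).Nonempty}
      = ⋃ i : Fin k, (fun x : Fin k → X => x i) ⁻¹' U := by
    ext x
    simp only [Set.mem_preimage, Set.mem_setOf_eq, Set.mem_iUnion, symPotProj]
    constructor
    · rintro ⟨y, ⟨i, rfl⟩, hy⟩
      exact ⟨i, hy⟩
    · rintro ⟨i, hi⟩
      exact ⟨x i, ⟨i, rfl⟩, hi⟩
  rw [h]
  exact isOpen_iUnion fun i => hU.preimage (continuous_apply i)

lemma symPot_sep (X : Type*) [TopologicalSpace X] [T2Space X] (k : ℕ) [NeZero k]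
    (A B : SymPot X k) {a : X} (ha : a ∈ A.1) (ha' : a ∉ B.1) :
    ∃ U V : Set (SymPot X k), IsOpen U ∧ IsOpen V ∧ A ∈ U ∧ B ∈ V ∧ Disjoint U V := by
  have hBfin : B.1.Finite := Set.finite_of_ncard_ne_zero B.2.1.ne'
  have hdisj : Disjoint ({a} : Set X) B.1 := by
    simpa [Set.disjoint_singleton_left] using ha'
  obtain ⟨u, v, hu, hv, hau, hBv, huv⟩ :=
    SeparatedNhds.of_isCompact_isCompact isCompact_singleton hBfin.isCompact hdisj
  refine ⟨{C : SymPot X k | (C.1 ∩ u).Nonempty}, {C : SymPot X k | C.1 ⊆ v},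
    symPot_isOpen_meet X k hu, symPot_isOpen_sub X k hv,
    ⟨a, ha, hau rfl⟩, hBv, ?_⟩
  rw [Set.disjoint_left]
  rintro C ⟨c, hc, hcu⟩ hCv
  exact Set.disjoint_left.mp huv hcu (hCv hc)

/-- if `X` is Hausdorff then so is `exp_k X`. -/
theorem symPot_t2 (X : Type*) [TopologicalSpace X] [T2Space X] (k : ℕ) [NeZero k] :
    T2Space (SymPot X k) := by
  constructor
  intro A B hAB
  have hne : A.1 ≠ B.1 := fun h => hAB (Subtype.ext h)
  by_cases h : A.1 ⊆ B.1
  · have h2 : ¬ B.1 ⊆ A.1 := fun h2 => hne (Set.Subset.antisymm h h2)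
    obtain ⟨b, hb, hb'⟩ := Set.not_subset.mp h2
    obtain ⟨U, V, hU, hV, hBU, hAV, hUV⟩ := symPot_sep X k B A hb hb'
    exact ⟨V, U, hV, hU, hAV, hBU, hUV.symm⟩
  · obtain ⟨a, haA, haB⟩ := Set.not_subset.mp h
    obtain ⟨U, V, hU, hV, hAU, hBV, hUV⟩ := symPot_sep X k A B haA haB
    exact ⟨U, V, hU, hV, hAU, hBV, hUV⟩
end

section
/- The map p : P → exp_3(S¹), p(x,y,z) = {e^{2πix}, e^{2πiy}, e^{2πiz}}, is surjective, where P = {(x,y,z) ∈ ℝ³ : x ≤ y ≤ z ≤ x+1 and 0 ≤ x+y+z ≤ 1}. -/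
open Set Real

/-- Morton's prism `P`. -/
def prismP : Set (ℝ × ℝ × ℝ) :=
  {v | v.1 ≤ v.2.1 ∧ v.2.1 ≤ v.2.2 ∧ v.2.2 ≤ v.1 + 1 ∧
    0 ≤ v.1 + v.2.1 + v.2.2 ∧ v.1 + v.2.1 + v.2.2 ≤ 1}

/-- The subset `{a, b, c}` of the circle, as an element of `exp_3 S¹`. -/
def tripleSet (a b c : Circle) : SymPot Circle 3 :=
  ⟨{a, b, c}, by
    refine ⟨(Set.ncard_pos (Set.toFinite _)).mpr ⟨a, by simp⟩, ?_⟩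
    calc ({a, b, c} : Set Circle).ncard ≤ ({b, c} : Set Circle).ncard + 1 :=
          Set.ncard_insert_le a _
      _ ≤ (({c} : Set Circle).ncard + 1) + 1 := by
          exact Nat.add_le_add_right (Set.ncard_insert_le b _) 1
      _ = 3 := by rw [Set.ncard_singleton]⟩

/-- The map `p : P → exp_3 S¹`, `p (x,y,z) = {e^{2πix}, e^{2πiy}, e^{2πiz}}`. -/
noncomputable def prismMap (v : prismP) : SymPot Circle 3 :=
  tripleSet (Circle.exp (2 * π * v.1.1)) (Circle.exp (2 * π * v.1.2.1))
    (Circle.exp (2 * π * v.1.2.2))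

lemma tripleSet_swap_left (a b c : Circle) : tripleSet a b c = tripleSet b a c := by
  apply Subtype.ext; simp [tripleSet, Set.insert_comm]

lemma tripleSet_swap_right (a b c : Circle) : tripleSet a b c = tripleSet a c b := by
  apply Subtype.ext; simp [tripleSet, Set.pair_comm]

lemma exists_angle (a : Circle) : ∃ t : ℝ, 0 ≤ t ∧ t < 1 ∧ Circle.exp (2*π*t) = a := by
  refine ⟨Int.fract (Complex.arg (a:ℂ) / (2*π)), Int.fract_nonneg _, Int.fract_lt_one _, ?_⟩
  have hπ : (2*π) ≠ 0 := by positivity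
  have h1 : 2*π*Int.fract (Complex.arg (a:ℂ) / (2*π))
      = Complex.arg (a:ℂ) - (⌊Complex.arg (a:ℂ) / (2*π)⌋ : ℤ) * (2*π) := by
    rw [Int.fract]; field_simp
  rw [h1, Circle.periodic_exp.sub_int_mul_eq, Circle.exp_arg]

lemma exp_sub_one (t : ℝ) : Circle.exp (2*π*(t-1)) = Circle.exp (2*π*t) := by
  have : 2*π*(t-1) = 2*π*t - 2*π := by ring
  rw [this, Circle.periodic_exp.sub_eq]

lemma key_sorted (t1 t2 t3 : ℝ) (h1 : 0 ≤ t1) (h2 : t1 ≤ t2) (h3 : t2 ≤ t3) (h4 : t3 < 1) :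
    ∃ v : prismP, prismMap v
      = tripleSet (Circle.exp (2*π*t1)) (Circle.exp (2*π*t2)) (Circle.exp (2*π*t3)) := by
  by_cases hs1 : t1 + t2 + t3 ≤ 1
  · exact ⟨⟨(t1, t2, t3), h2, h3, by linarith, by linarith, hs1⟩, rfl⟩
  · by_cases hs2 : t1 + t2 + t3 ≤ 2
    · refine ⟨⟨(t3 - 1, t1, t2),
        by refine ⟨?_, ?_, ?_, ?_, ?_⟩ <;> dsimp only <;> linarith⟩, ?_⟩
      show tripleSet (Circle.exp (2*π*(t3-1))) (Circle.exp (2*π*t1)) (Circle.exp (2*π*t2)) = _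
      rw [exp_sub_one, tripleSet_swap_left, tripleSet_swap_right]
    · refine ⟨⟨(t2 - 1, t3 - 1, t1),
        by refine ⟨?_, ?_, ?_, ?_, ?_⟩ <;> dsimp only <;> linarith⟩, ?_⟩
      show tripleSet (Circle.exp (2*π*(t2-1))) (Circle.exp (2*π*(t3-1))) (Circle.exp (2*π*t1)) = _
      rw [exp_sub_one, exp_sub_one, tripleSet_swap_right, tripleSet_swap_left,
        tripleSet_swap_right]

lemma key (a b c : Circle) : ∃ v : prismP, prismMap v = tripleSet a b c := by
  obtain ⟨ta, ha0, ha1, ha⟩ := exists_angle a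
  obtain ⟨tb, hb0, hb1, hb⟩ := exists_angle b
  obtain ⟨tc, hc0, hc1, hc⟩ := exists_angle c
  rcases le_total ta tb with hab | hab <;> rcases le_total tb tc with hbc | hbc <;>
    rcases le_total ta tc with hac | hac
  · obtain ⟨v, hv⟩ := key_sorted ta tb tc ha0 hab hbc hc1
    exact ⟨v, by rw [hv, ha, hb, hc]⟩
  · obtain ⟨v, hv⟩ := key_sorted ta tb tc ha0 hab hbc hc1
    exact ⟨v, by rw [hv, ha, hb, hc]⟩
  · obtain ⟨v, hv⟩ := key_sorted ta tc tb ha0 hac hbc hb1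
    exact ⟨v, by rw [hv, ha, hb, hc, tripleSet_swap_right]⟩
  · obtain ⟨v, hv⟩ := key_sorted tc ta tb hc0 hac hab hb1
    exact ⟨v, by rw [hv, ha, hb, hc, tripleSet_swap_left, tripleSet_swap_right]⟩
  · obtain ⟨v, hv⟩ := key_sorted tb ta tc hb0 hab hac hc1
    exact ⟨v, by rw [hv, ha, hb, hc, tripleSet_swap_left]⟩
  · obtain ⟨v, hv⟩ := key_sorted tb tc ta hb0 hbc hac ha1
    exact ⟨v, by rw [hv, ha, hb, hc, tripleSet_swap_right, tripleSet_swap_left]⟩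
  · obtain ⟨v, hv⟩ := key_sorted tc tb ta hc0 hbc hab ha1
    exact ⟨v, by rw [hv, ha, hb, hc, tripleSet_swap_left, tripleSet_swap_right,
      tripleSet_swap_left]⟩
  · obtain ⟨v, hv⟩ := key_sorted tc tb ta hc0 hbc hab ha1
    exact ⟨v, by rw [hv, ha, hb, hc, tripleSet_swap_left, tripleSet_swap_right,
      tripleSet_swap_left]⟩

/-- `p : P → exp_3 S¹` is surjective. -/
theorem prismMap_surjective : Function.Surjective prismMap := by
  rintro ⟨A, hpos, hle⟩
  have hA : A.ncard = 1 ∨ A.ncard = 2 ∨ A.ncard = 3 := by omega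
  rcases hA with h | h | h
  · obtain ⟨a, rfl⟩ := Set.ncard_eq_one.mp h
    obtain ⟨v, hv⟩ := key a a a
    exact ⟨v, hv.trans (Subtype.ext (by simp [tripleSet]))⟩
  · obtain ⟨a, b, -, rfl⟩ := Set.ncard_eq_two.mp h
    obtain ⟨v, hv⟩ := key a b b
    exact ⟨v, hv.trans (Subtype.ext (by simp [tripleSet]))⟩
  · obtain ⟨a, b, c, -, -, -, rfl⟩ := Set.ncard_eq_three.mp h
    obtain ⟨v, hv⟩ := key a b c
    exact ⟨v, hv.trans (Subtype.ext rfl)⟩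
end

section
/- The prism P = {(x,y,z) ∈ ℝ³ : x ≤ y ≤ z ≤ x+1, 0 ≤ x+y+z ≤ 1} is the convex hull of the six points (0,0,0), (−2/3,1/3,1/3), (−1/3,−1/3,2/3), (0,0,1), (1/3,1/3,1/3), (−1/3,2/3,2/3). -/
open Set Real

/-- `P` is the convex hull of its six vertices. -/
theorem prismP_eq_convexHull :
    prismP = convexHull ℝ
      ({(0, 0, 0), (-2/3, 1/3, 1/3), (-1/3, -1/3, 2/3),
        (0, 0, 1), (1/3, 1/3, 1/3), (-1/3, 2/3, 2/3)} : Set (ℝ × ℝ × ℝ)) := by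
  apply Subset.antisymm
  · rintro ⟨x, y, z⟩ ⟨h1, h2, h3, h4, h5⟩
    simp only at h1 h2 h3 h4 h5
    have h3' : (0:ℝ) ≤ x + 1 - z := by linarith
    have h1' : (0:ℝ) ≤ y - x := by linarith
    have h2' : (0:ℝ) ≤ z - y := by linarith
    have ht0 : (0:ℝ) ≤ x + y + z := h4
    have ht1 : (0:ℝ) ≤ 1 - (x + y + z) := by linarith
    refine mem_convexHull_of_exists_fintype (ι := Fin 6)
      (![ (1 - (x+y+z)) * (x + 1 - z), (1 - (x+y+z)) * (y - x), (1 - (x+y+z)) * (z - y),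
          (x+y+z) * (z - y), (x+y+z) * (x + 1 - z), (x+y+z) * (y - x)])
      (![ (0, 0, 0), (-2/3, 1/3, 1/3), (-1/3, -1/3, 2/3),
          (0, 0, 1), (1/3, 1/3, 1/3), (-1/3, 2/3, 2/3)]) ?_ ?_ ?_ ?_
    · intro i
      fin_cases i
      · exact mul_nonneg ht1 h3'
      · exact mul_nonneg ht1 h1'
      · exact mul_nonneg ht1 h2'
      · exact mul_nonneg ht0 h2'
      · exact mul_nonneg ht0 h3'
      · exact mul_nonneg ht0 h1'
    · rw [Fin.sum_univ_six]
      show (1 - (x+y+z)) * (x + 1 - z) + (1 - (x+y+z)) * (y - x) + (1 - (x+y+z)) * (z - y)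
          + (x+y+z) * (z - y) + (x+y+z) * (x + 1 - z) + (x+y+z) * (y - x) = 1
      ring
    · intro i
      fin_cases i
      · exact Or.inl rfl
      · exact Or.inr (Or.inl rfl)
      · exact Or.inr (Or.inr (Or.inl rfl))
      · exact Or.inr (Or.inr (Or.inr (Or.inl rfl)))
      · exact Or.inr (Or.inr (Or.inr (Or.inr (Or.inl rfl))))
      · exact Or.inr (Or.inr (Or.inr (Or.inr (Or.inr rfl))))
    · rw [Fin.sum_univ_six]
      show ((1 - (x+y+z)) * (x + 1 - z)) • ((0:ℝ), (0:ℝ), (0:ℝ))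
          + ((1 - (x+y+z)) * (y - x)) • ((-2/3 : ℝ), (1/3 : ℝ), (1/3 : ℝ))
          + ((1 - (x+y+z)) * (z - y)) • ((-1/3 : ℝ), (-1/3 : ℝ), (2/3 : ℝ))
          + ((x+y+z) * (z - y)) • ((0:ℝ), (0:ℝ), (1:ℝ))
          + ((x+y+z) * (x + 1 - z)) • ((1/3 : ℝ), (1/3 : ℝ), (1/3 : ℝ))
          + ((x+y+z) * (y - x)) • ((-1/3 : ℝ), (2/3 : ℝ), (2/3 : ℝ)) = (x, y, z)
      simp only [Prod.smul_mk, smul_eq_mul, Prod.mk_add_mk, Prod.mk.injEq]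
      refine ⟨by ring, by ring, by ring⟩
  · apply convexHull_min
    · intro p hp
      simp only [mem_insert_iff, mem_singleton_iff] at hp
      rcases hp with rfl | rfl | rfl | rfl | rfl | rfl <;>
        refine ⟨by norm_num, by norm_num, by norm_num, by norm_num, by norm_num⟩
    · rintro ⟨px, py, pz⟩ hp ⟨qx, qy, qz⟩ hq a b ha hb hab
      obtain ⟨p1, p2, p3, p4, p5⟩ := hp
      obtain ⟨q1, q2, q3, q4, q5⟩ := hq
      simp only at *
      refine ⟨?_, ?_, ?_, ?_, ?_⟩ <;>
        simp only [Prod.smul_mk, Prod.mk_add_mk, smul_eq_mul] <;> nlinarith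
end

section
/- Let P = {(x,y,z) ∈ ℝ³ : x ≤ y ≤ z ≤ x+1, 0 ≤ x+y+z ≤ 1} and p(x,y,z) = {e^{2πix}, e^{2πiy}, e^{2πiz}}. Then p⁻¹(exp_2(S¹)) = S, where S = {(x,y,z) ∈ P : x = y or y = z or z = x+1}. -/
open Set Real

lemma ncard_triple_le_two_iff {a b c : Circle} :
    ({a, b, c} : Set Circle).ncard ≤ 2 ↔ a = b ∨ b = c ∨ a = c := by
  constructor
  · intro h
    by_contra hne
    push_neg at hne
    obtain ⟨hab, hbc, hac⟩ := hne
    have : ({a, b, c} : Set Circle).ncard = 3 := by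
      rw [Set.ncard_insert_of_notMem (by simp [hab, hac]) (Set.toFinite _),
        Set.ncard_insert_of_notMem (by simp [hbc]) (Set.toFinite _),
        Set.ncard_singleton]
    omega
  · rintro (rfl | rfl | rfl)
    · calc ({a, a, c} : Set Circle).ncard = ({a, c} : Set Circle).ncard := by
            congr 1; simp
        _ ≤ ({c} : Set Circle).ncard + 1 := Set.ncard_insert_le a _
        _ = 2 := by rw [Set.ncard_singleton]
    · calc ({a, b, b} : Set Circle).ncard = ({a, b} : Set Circle).ncard := by
            congr 1; simp [Set.insert_comm]
        _ ≤ ({b} : Set Circle).ncard + 1 := Set.ncard_insert_le a _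
        _ = 2 := by rw [Set.ncard_singleton]
    · calc ({a, b, a} : Set Circle).ncard = ({a, b} : Set Circle).ncard := by
            congr 1; ext x; simp; tauto
        _ ≤ ({b} : Set Circle).ncard + 1 := Set.ncard_insert_le a _
        _ = 2 := by rw [Set.ncard_singleton]

lemma exp2pi_eq_iff (x y : ℝ) :
    Circle.exp (2 * π * x) = Circle.exp (2 * π * y) ↔ ∃ m : ℤ, x = y + m := by
  rw [Circle.exp_eq_exp]
  constructor
  · rintro ⟨m, hm⟩
    refine ⟨m, ?_⟩
    have hπ := Real.pi_ne_zero
    have h2 : 2 * π * x = 2 * π * (y + m) := by rw [hm]; ring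
    exact mul_left_cancel₀ (by positivity) h2
  · rintro ⟨m, hm⟩
    exact ⟨m, by rw [hm]; ring⟩

lemma int_cases_of_mem {m : ℤ} (h1 : (-1:ℝ) ≤ m) (h2 : (m:ℝ) ≤ 0) :
    (m : ℝ) = 0 ∨ (m : ℝ) = -1 := by
  have a1 : (-1 : ℤ) ≤ m := by exact_mod_cast h1
  have a2 : m ≤ 0 := by exact_mod_cast h2
  have : m = 0 ∨ m = -1 := by omega
  rcases this with rfl | rfl <;> simp

/-- `p ⁻¹ (exp_2 S¹) = S`. -/
theorem prismMap_preimage_exp2 :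
    prismMap ⁻¹' {A : SymPot Circle 3 | A.1.ncard ≤ 2} =
      {v : prismP | v.1.1 = v.1.2.1 ∨ v.1.2.1 = v.1.2.2 ∨ v.1.2.2 = v.1.1 + 1} := by
  ext v
  obtain ⟨⟨x, y, z⟩, hxy, hyz, hzx, h0, h1⟩ := v
  simp only [Set.mem_preimage, Set.mem_setOf_eq, prismMap, tripleSet]
  change ({Circle.exp (2 * π * x), Circle.exp (2 * π * y), Circle.exp (2 * π * z)} : Set Circle).ncard ≤ 2 ↔ _
  rw [ncard_triple_le_two_iff]
  simp only [exp2pi_eq_iff]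
  constructor
  · rintro (⟨m, hm⟩ | ⟨m, hm⟩ | ⟨m, hm⟩)
    · rcases int_cases_of_mem (m := m) (by linarith) (by linarith) with h | h
      · left; linarith
      · right; right; linarith
    · rcases int_cases_of_mem (m := m) (by linarith) (by linarith) with h | h
      · right; left; linarith
      · right; right; linarith
    · rcases int_cases_of_mem (m := m) (by linarith) (by linarith) with h | h
      · left; linarith
      · right; right; linarith
  · rintro (h | h | h)
    · exact Or.inl ⟨0, by simp [h]⟩
    · exact Or.inr (Or.inl ⟨0, by simp [h]⟩)
    · exact Or.inr (Or.inr ⟨-1, by push_cast; linarith⟩)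
end

section
/- For (x,y,z), (x',y',z') in P = {(x,y,z) ∈ ℝ³ : x ≤ y ≤ z ≤ x+1, 0 ≤ x+y+z ≤ 1} with both points in the interior of P (i.e., all defining inequalities strict), p(x,y,z) = p(x',y',z') implies (x,y,z) = (x',y',z'), where p(x,y,z) = {e^{2πix}, e^{2πiy}, e^{2πiz}}. -/
open Set Real

lemma circ_eq {a b : ℝ} (h : Circle.exp (2*π*a) = Circle.exp (2*π*b)) : ∃ m : ℤ, a = b + m := by
  obtain ⟨m, hm⟩ := Circle.exp_eq_exp.mp h
  refine ⟨m, ?_⟩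
  have h2 : (2*π) * a = (2*π) * (b + m) := by ring_nf; ring_nf at hm; linarith
  have := Real.pi_ne_zero
  field_simp at h2
  linarith [h2]

lemma classify (m n k : ℤ) (bm1 : (-2:ℝ) < m) (bm2 : (m:ℝ) < 1)
    (d1 : (-2:ℝ) < m - n) (d2 : (m:ℝ) - n < 1)
    (d3 : (-2:ℝ) < n - k) (d4 : (n:ℝ) - k < 1)
    (d5 : (-2:ℝ) < m - k) (d6 : (m:ℝ) - k < 1) :
    (m = -1 ∧ n = -1 ∧ k = -1) ∨ (m = -1 ∧ n = -1 ∧ k = 0) ∨ (m = -1 ∧ n = 0 ∧ k = 0) ∨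
    (m = 0 ∧ n = 0 ∧ k = 0) ∨ (m = 0 ∧ n = 0 ∧ k = 1) ∨ (m = 0 ∧ n = 1 ∧ k = 1) := by
  have a1 : (-2:ℤ) < m := by exact_mod_cast bm1
  have a2 : m < 1 := by exact_mod_cast bm2
  have a3 : (-2:ℤ) < m - n := by exact_mod_cast d1
  have a4 : m - n < 1 := by exact_mod_cast d2
  have a5 : (-2:ℤ) < n - k := by exact_mod_cast d3
  have a6 : n - k < 1 := by exact_mod_cast d4
  have a7 : (-2:ℤ) < m - k := by exact_mod_cast d5
  have a8 : m - k < 1 := by exact_mod_cast d6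
  omega


set_option maxHeartbeats 4000000 in
/-- `p` is injective on the interior of `P`. -/
theorem prismMap_injOn_interior (x y z x' y' z' : ℝ)
    (h1 : x < y) (h2 : y < z) (h3 : z < x + 1)
    (h4 : 0 < x + y + z) (h5 : x + y + z < 1)
    (h1' : x' < y') (h2' : y' < z') (h3' : z' < x' + 1)
    (h4' : 0 < x' + y' + z') (h5' : x' + y' + z' < 1)
    (hp : tripleSet (Circle.exp (2 * π * x)) (Circle.exp (2 * π * y))
            (Circle.exp (2 * π * z)) =
          tripleSet (Circle.exp (2 * π * x')) (Circle.exp (2 * π * y'))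
            (Circle.exp (2 * π * z'))) :
    x = x' ∧ y = y' ∧ z = z' := by
  have hset : ({Circle.exp (2 * π * x), Circle.exp (2 * π * y), Circle.exp (2 * π * z)} : Set Circle)
      = {Circle.exp (2 * π * x'), Circle.exp (2 * π * y'), Circle.exp (2 * π * z')} :=
    congrArg Subtype.val hp
  have hx : Circle.exp (2*π*x) = Circle.exp (2*π*x') ∨ Circle.exp (2*π*x) = Circle.exp (2*π*y')
      ∨ Circle.exp (2*π*x) = Circle.exp (2*π*z') := by
    have : Circle.exp (2*π*x) ∈ ({Circle.exp (2*π*x'), Circle.exp (2*π*y'), Circle.exp (2*π*z')} : Set Circle) := by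
      rw [← hset]
      simp only [Set.mem_insert_iff, Set.mem_singleton_iff]
      tauto
    simpa only [Set.mem_insert_iff, Set.mem_singleton_iff] using this
  have hy : Circle.exp (2*π*y) = Circle.exp (2*π*x') ∨ Circle.exp (2*π*y) = Circle.exp (2*π*y')
      ∨ Circle.exp (2*π*y) = Circle.exp (2*π*z') := by
    have : Circle.exp (2*π*y) ∈ ({Circle.exp (2*π*x'), Circle.exp (2*π*y'), Circle.exp (2*π*z')} : Set Circle) := by
      rw [← hset]
      simp only [Set.mem_insert_iff, Set.mem_singleton_iff]
      tauto
    simpa only [Set.mem_insert_iff, Set.mem_singleton_iff] using this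
  have hz : Circle.exp (2*π*z) = Circle.exp (2*π*x') ∨ Circle.exp (2*π*z) = Circle.exp (2*π*y')
      ∨ Circle.exp (2*π*z) = Circle.exp (2*π*z') := by
    have : Circle.exp (2*π*z) ∈ ({Circle.exp (2*π*x'), Circle.exp (2*π*y'), Circle.exp (2*π*z')} : Set Circle) := by
      rw [← hset]
      simp only [Set.mem_insert_iff, Set.mem_singleton_iff]
      tauto
    simpa only [Set.mem_insert_iff, Set.mem_singleton_iff] using this
  rcases hx with h | h | h <;> rcases hy with h' | h' | h' <;> rcases hz with h'' | h'' | h'' <;>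
    obtain ⟨m, hm⟩ := circ_eq h <;> obtain ⟨n, hn⟩ := circ_eq h' <;> obtain ⟨k, hk⟩ := circ_eq h'' <;>
    rcases classify m n k (by linarith) (by linarith) (by linarith) (by linarith)
      (by linarith) (by linarith) (by linarith) (by linarith) with
      ⟨rfl, rfl, rfl⟩ | ⟨rfl, rfl, rfl⟩ | ⟨rfl, rfl, rfl⟩ | ⟨rfl, rfl, rfl⟩ |
      ⟨rfl, rfl, rfl⟩ | ⟨rfl, rfl, rfl⟩ <;>
    push_cast at hm hn hk <;>
    exact ⟨by linarith, by linarith, by linarith⟩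
end
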